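/- Let δ be a limit ordinal, N an R-module, and (M_i)_{i<δ} an increasing chain of submodules of N with N = ⋃_{i<δ} M_i. Then the kernel of the canonical surjective R-homomorphism f : ⊕_{i<δ} M_i → N given by (m_i)_{i<δ} ↦ ∑_{i<δ} m_i is a pure submodule of ⊕_{i<δ} M_i (equivalently, f is a pure epimorphism). -/

import Mathlib

universe u v w

/-- `A` is a pure submodule of its ambient module: every finite system of
`R`-linear equations `∑ j, r i j • x j = a i` with constants `a i ∈ A` that has
a solution in the ambient module has a solution in `A`. -/
def IsPureSubmodule {R : Type*} [Ring R] {M : Type*} [AddCommGroup M] [Module R M]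
    (A : Submodule R M) : Prop :=
  ∀ (m n : ℕ) (r : Fin m → Fin n → R) (a : Fin m → M),
    (∀ i, a i ∈ A) →
    (∃ x : Fin n → M, ∀ i, (∑ j, r i j • x j) = a i) →
    ∃ x : Fin n → M, (∀ j, x j ∈ A) ∧ ∀ i, (∑ j, r i j • x j) = a i

theorem aux_pure {R : Type u} [Ring R] {N : Type v} [AddCommGroup N] [Module R N]
    {ι : Type w} [Nonempty ι] [DecidableEq ι]
    (M : ι → Submodule R N)
    (hdir : Directed (· ≤ ·) M)
    (hbound : ∀ s : Finset ι, ∃ k, ∀ i ∈ s, M i ≤ M k)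
    (hunion : (⨆ i, M i) = ⊤) :
    Function.Surjective (DirectSum.toModule R ι N (fun i => (M i).subtype)) ∧
    IsPureSubmodule
      (LinearMap.ker (DirectSum.toModule R ι N (fun i => (M i).subtype))) := by
  classical
  set f := DirectSum.toModule R ι N (fun i => (M i).subtype) with hfdef
  have hsurj : Function.Surjective f := by
    intro y
    have hy : y ∈ ⨆ i, M i := hunion ▸ Submodule.mem_top
    obtain ⟨i, hi⟩ := (Submodule.mem_iSup_of_directed _ hdir).mp hy
    refine ⟨DirectSum.lof R ι (fun i => (M i : Type v)) i ⟨y, hi⟩, ?_⟩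
    rw [hfdef, DirectSum.toModule_lof]
    rfl
  refine ⟨hsurj, ?_⟩
  rintro m n r a ha ⟨x, hx⟩
  obtain ⟨k, hk⟩ := hbound (Finset.univ.biUnion (fun j => (x j).support))
  have hmem : ∀ j, f (x j) ∈ M k := by
    intro j
    rw [← DirectSum.sum_support_of (x := x j), map_sum]
    refine Submodule.sum_mem _ (fun s hs => ?_)
    have hs' : s ∈ Finset.univ.biUnion (fun j => (x j).support) :=
      Finset.mem_biUnion.mpr ⟨j, Finset.mem_univ j, hs⟩
    have heq : f (DirectSum.of (fun i => (M i : Type v)) s (x j s)) = ((x j s : N)) := by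
      rw [← DirectSum.lof_eq_of R, hfdef, DirectSum.toModule_lof]
      rfl
    rw [heq]
    exact hk s hs' (x j s).2
  let x' : Fin n → DirectSum ι (fun i => (M i : Type v)) :=
    fun j => x j - DirectSum.lof R ι (fun i => (M i : Type v)) k ⟨f (x j), hmem j⟩
  have hcorr : ∀ i, (∑ j, r i j • (⟨f (x j), hmem j⟩ : M k)) = 0 := by
    intro i
    have hai : f (a i) = 0 := (LinearMap.mem_ker).mp (ha i)
    apply Subtype.ext
    have : ((∑ j, r i j • (⟨f (x j), hmem j⟩ : M k) : M k) : N)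
        = ∑ j, r i j • f (x j) := by
      push_cast
      rfl
    rw [this]
    calc (∑ j, r i j • f (x j)) = f (∑ j, r i j • x j) := by
          rw [map_sum]; simp [map_smul]
      _ = f (a i) := by rw [hx i]
      _ = 0 := hai
  refine ⟨x', fun j => ?_, fun i => ?_⟩
  · have : f (x' j) = 0 := by
      simp only [x', map_sub, hfdef, DirectSum.toModule_lof]
      simp
    exact (LinearMap.mem_ker).mpr this
  · have h1 : ∑ j, r i j • x' j
        = (∑ j, r i j • x j)
          - DirectSum.lof R ι (fun i => (M i : Type v)) k
              (∑ j, r i j • (⟨f (x j), hmem j⟩ : M k)) := by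
      rw [map_sum, ← Finset.sum_sub_distrib]
      refine Finset.sum_congr rfl (fun j _ => ?_)
      simp only [x', smul_sub]
      congr 1
      exact ((DirectSum.lof R ι (fun i => (M i : Type v)) k).map_smul _ _).symm
    rw [h1, hcorr i, map_zero, sub_zero, hx i]

theorem stmt5 {R : Type u} [Ring R] {N : Type v} [AddCommGroup N] [Module R N]
    (δ : Ordinal.{w}) (hδ : Order.IsSuccLimit δ)
    (M : {o : Ordinal.{w} // o < δ} → Submodule R N)
    (hmono : ∀ i j : {o : Ordinal.{w} // o < δ}, i.1 ≤ j.1 → M i ≤ M j)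
    (hunion : (⨆ i, M i) = ⊤) :
    -- the canonical map `⊕_{i<δ} M_i → N`, `(m_i) ↦ ∑ m_i`, is surjective and
    -- its kernel is a pure submodule of `⊕_{i<δ} M_i`
    Function.Surjective
      (DirectSum.toModule R {o : Ordinal.{w} // o < δ} N (fun i => (M i).subtype)) ∧
    IsPureSubmodule
      (LinearMap.ker
        (DirectSum.toModule R {o : Ordinal.{w} // o < δ} N (fun i => (M i).subtype))) := by
  classical
  have hne : Nonempty {o : Ordinal.{w} // o < δ} := ⟨⟨0, hδ.pos⟩⟩
  refine aux_pure M ?_ ?_ hunion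
  · intro i j
    rcases le_total i.1 j.1 with h | h
    · exact ⟨j, hmono _ _ h, le_refl _⟩
    · exact ⟨i, le_refl _, hmono _ _ h⟩
  · intro s
    refine ⟨⟨s.sup (fun t => t.1), ?_⟩, fun i hi => hmono _ _ (Finset.le_sup hi)⟩
    exact (Finset.sup_lt_iff hδ.pos).mpr (fun t _ => t.2)
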